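/- Let K be a field, q, u ∈ K*, and let Q, Q̃, P : K* → K be functions. Suppose a_0 ∈ K* satisfies Q(a_0) = 0, Q̃(a_0) ≠ 0, Q(a_0 q^{−2}) ≠ 0, P(a_0 q^{−1}) ≠ 0, and that the relation u·Q(a q^{−1})·Q̃(a q) − u^{−1}·Q(a q)·Q̃(a q^{−1}) = P(a) holds for a = a_0 q and for a = a_0 q^{−1}. Then −u^{−2} · Q(a_0 q^2)/Q(a_0 q^{−2}) = P(a_0 q)/P(a_0 q^{−1}). -/

import Mathlib

/-- Bethe Ansatz derivation from the QQ̃-system: if `a₀` is a zero of `Q` which is not a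
zero of `Q̃`, with `Q(a₀q^{−2}) ≠ 0` and `P(a₀q^{−1}) ≠ 0`, and the relation
`u Q(aq^{−1}) Q̃(aq) − u^{−1} Q(aq) Q̃(aq^{−1}) = P(a)` holds for `a = a₀q` and
`a = a₀q^{−1}`, then `−u^{−2} Q(a₀q²)/Q(a₀q^{−2}) = P(a₀q)/P(a₀q^{−1})`. -/
theorem bethe_ansatz_from_QQ {K : Type*} [Field K] (q u : K) (hq : q ≠ 0) (hu : u ≠ 0)
    (Q Qt P : K → K) (a₀ : K) (ha₀ : a₀ ≠ 0)
    (hQ0 : Q a₀ = 0) (hQt : Qt a₀ ≠ 0)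
    (hQden : Q (a₀ * q⁻¹ ^ 2) ≠ 0) (hPden : P (a₀ * q⁻¹) ≠ 0)
    (hrel : ∀ a : K, a = a₀ * q ∨ a = a₀ * q⁻¹ →
      u * Q (a * q⁻¹) * Qt (a * q) - u⁻¹ * Q (a * q) * Qt (a * q⁻¹) = P a) :
    -(u⁻¹ ^ 2) * (Q (a₀ * q ^ 2) / Q (a₀ * q⁻¹ ^ 2)) = P (a₀ * q) / P (a₀ * q⁻¹) := by
  have h1 := hrel (a₀ * q) (Or.inl rfl)
  have h2 := hrel (a₀ * q⁻¹) (Or.inr rfl)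
  rw [show a₀ * q * q⁻¹ = a₀ by field_simp, show a₀ * q * q = a₀ * q ^ 2 by ring,
    hQ0] at h1
  rw [show a₀ * q⁻¹ * q = a₀ by field_simp, show a₀ * q⁻¹ * q⁻¹ = a₀ * q⁻¹ ^ 2 by ring,
    hQ0] at h2
  have hQden' : Q (a₀ / q ^ 2) ≠ 0 := by rw [div_eq_mul_inv, ← inv_pow]; exact hQden
  have hPden' : P (a₀ / q) ≠ 0 := by rw [div_eq_mul_inv]; exact hPden
  field_simp at h1 h2 ⊢
  have h2' : u * Qt a₀ * Q (a₀ / q ^ 2) = P (a₀ / q) :=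
    mul_left_cancel₀ hu (by linear_combination h2)
  linear_combination (u * Q (a₀ / q ^ 2)) * h1 + Q (a₀ * q ^ 2) * h2'
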